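/- (Proposition 3.9) Suppose a discrete form Ω : ℤ⁴ → Cl satisfies equation (3.17): −DΩ = mΩe. For signs ε, s, t ∈ {1, −1} put X_{ε,s,t} := Ω P_{εe} P_{s0} P_{t12}, where P_{εe} = ½(1+ε·ie), P_{s0} = ½(1+s·e₀), P_{t12} = ½(1+t·ie₁e₂). Then Ω equals the sum of the eight parts X_{ε,s,t}, and each part satisfies the discrete Hestenes equation with sign −εst: −(D X_{ε,s,t})e₁e₂ = (−εst)·m·X_{ε,s,t} e₀. In particular the parts with (ε,s,t) ∈ {(−1,1,1), (1,−1,1), (1,1,−1), (−1,−1,−1)} satisfy the discrete Hestenes equation −(DX)e₁e₂ = mXe₀, while the other four parts satisfy it with the sign of the right-hand side reversed. -/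
import Mathlib

noncomputable section

/-- The Minkowski quadratic form `Q v = v₀² − v₁² − v₂² − v₃²` on `ℂ⁴`. -/
def Q : QuadraticForm ℂ (Fin 4 → ℂ) :=
  QuadraticMap.weightedSumSquares ℂ ![(1 : ℂ), -1, -1, -1]

/-- The Clifford algebra of spacetime over `ℂ`. -/
abbrev Cl : Type := CliffordAlgebra Q

/-- The generators `e_μ`, images of the standard basis vectors. -/
def e (μ : Fin 4) : Cl := CliffordAlgebra.ι Q (Pi.single μ 1)

/-- The volume element `e = e₀e₁e₂e₃`. -/
def eV : Cl := e 0 * e 1 * e 2 * e 3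

/-- The difference operator `(Δ_μ Ω)(k) = Ω(k + 1_μ) − Ω(k)`. -/
def Δ (μ : Fin 4) (Ω : (Fin 4 → ℤ) → Cl) : (Fin 4 → ℤ) → Cl :=
  fun k => Ω (k + Pi.single μ 1) - Ω k

/-- The discrete Dirac operator `DΩ = Σ_μ e_μ · (Δ_μ Ω)`. -/
def Dirac (Ω : (Fin 4 → ℤ) → Cl) : (Fin 4 → ℤ) → Cl :=
  fun k => ∑ μ : Fin 4, e μ * Δ μ Ω k

/-- The projectors `P_{εe} = ½(1 + ε i e)` for `ε = ±1`. -/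
def Pe (ε : ℂ) : Cl := (2⁻¹ : ℂ) • (1 + (ε * Complex.I) • eV)

/-- The projectors `P_{s0} = ½(1 + s e₀)` for `s = ±1`. -/
def P0 (s : ℂ) : Cl := (2⁻¹ : ℂ) • (1 + s • e 0)

/-- The projectors `P_{t12} = ½(1 + t i e₁e₂)` for `t = ±1`. -/
def P12 (t : ℂ) : Cl := (2⁻¹ : ℂ) • (1 + (t * Complex.I) • (e 1 * e 2))

lemma Q_single (μ : Fin 4) : Q (Pi.single μ 1) = ![(1:ℂ),-1,-1,-1] μ := by
  rw [Q, QuadraticMap.weightedSumSquares_apply]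
  fin_cases μ <;> simp [Fin.sum_univ_four, Pi.single_apply]

lemma e_sq (μ : Fin 4) : e μ * e μ = algebraMap ℂ Cl (![(1:ℂ),-1,-1,-1] μ) := by
  rw [e, CliffordAlgebra.ι_sq_scalar, Q_single]

lemma polar_single (μ ν : Fin 4) (h : μ ≠ ν) :
    QuadraticMap.polar Q (Pi.single μ (1:ℂ)) (Pi.single ν 1) = 0 := by
  simp only [QuadraticMap.polar, Q, QuadraticMap.weightedSumSquares_apply]
  fin_cases μ <;> fin_cases ν <;> simp_all [Fin.sum_univ_four, Pi.single_apply]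

lemma e_anticomm (μ ν : Fin 4) (h : μ ≠ ν) : e μ * e ν = -(e ν * e μ) := by
  have h2 := CliffordAlgebra.ι_mul_ι_add_swap (Q := Q) (Pi.single μ 1) (Pi.single ν 1)
  rw [polar_single μ ν h, map_zero] at h2
  exact eq_neg_of_add_eq_zero_left h2

lemma sq0 : e 0 * e 0 = 1 := by rw [e_sq]; simp
lemma sq1 : e 1 * e 1 = -1 := by rw [e_sq]; simp
lemma sq2 : e 2 * e 2 = -1 := by rw [e_sq]; simp
lemma sq3 : e 3 * e 3 = -1 := by rw [e_sq]; simp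
lemma sq0' (x : Cl) : e 0 * (e 0 * x) = x := by rw [← mul_assoc, sq0, one_mul]
lemma sq1' (x : Cl) : e 1 * (e 1 * x) = -x := by rw [← mul_assoc, sq1, neg_one_mul]
lemma sq2' (x : Cl) : e 2 * (e 2 * x) = -x := by rw [← mul_assoc, sq2, neg_one_mul]
lemma sq3' (x : Cl) : e 3 * (e 3 * x) = -x := by rw [← mul_assoc, sq3, neg_one_mul]
lemma sw10 : e 1 * e 0 = -(e 0 * e 1) := e_anticomm 1 0 (by decide)
lemma sw20 : e 2 * e 0 = -(e 0 * e 2) := e_anticomm 2 0 (by decide)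
lemma sw30 : e 3 * e 0 = -(e 0 * e 3) := e_anticomm 3 0 (by decide)
lemma sw21 : e 2 * e 1 = -(e 1 * e 2) := e_anticomm 2 1 (by decide)
lemma sw31 : e 3 * e 1 = -(e 1 * e 3) := e_anticomm 3 1 (by decide)
lemma sw32 : e 3 * e 2 = -(e 2 * e 3) := e_anticomm 3 2 (by decide)
lemma sw' (μ ν : Fin 4) (h : μ ≠ ν) (x : Cl) :
    e μ * (e ν * x) = -(e ν * (e μ * x)) := by
  rw [← mul_assoc, e_anticomm μ ν h, neg_mul, mul_assoc]
lemma sw10' (x : Cl) : e 1 * (e 0 * x) = -(e 0 * (e 1 * x)) := sw' 1 0 (by decide) x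
lemma sw20' (x : Cl) : e 2 * (e 0 * x) = -(e 0 * (e 2 * x)) := sw' 2 0 (by decide) x
lemma sw30' (x : Cl) : e 3 * (e 0 * x) = -(e 0 * (e 3 * x)) := sw' 3 0 (by decide) x
lemma sw21' (x : Cl) : e 2 * (e 1 * x) = -(e 1 * (e 2 * x)) := sw' 2 1 (by decide) x
lemma sw31' (x : Cl) : e 3 * (e 1 * x) = -(e 1 * (e 3 * x)) := sw' 3 1 (by decide) x
lemma sw32' (x : Cl) : e 3 * (e 2 * x) = -(e 2 * (e 3 * x)) := sw' 3 2 (by decide) x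

lemma hPe_sum : Pe 1 + Pe (-1) = 1 := by rw [Pe, Pe]; module
lemma hP0_sum : P0 1 + P0 (-1) = 1 := by rw [P0, P0]; module
lemma hP12_sum : P12 1 + P12 (-1) = 1 := by rw [P12, P12]; module

set_option maxHeartbeats 2000000 in
lemma key (ε s t : ℂ) (hε : ε = 1 ∨ ε = -1) (hs : s = 1 ∨ s = -1) (ht : t = 1 ∨ t = -1) :
    eV * (Pe ε * (P0 s * (P12 t * (e 1 * e 2)))) =
      (-(ε*s*t)) • (Pe ε * (P0 s * (P12 t * e 0))) := by
  rcases hε with rfl | rfl <;> rcases hs with rfl | rfl <;> rcases ht with rfl | rfl <;>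
  · simp only [Pe, P0, P12, eV, smul_add, smul_smul, mul_add, add_mul, mul_smul_comm,
      smul_mul_assoc, mul_one, one_mul, mul_assoc]
    simp only [sq0, sq1, sq2, sq3, sq0', sq1', sq2', sq3', sw10, sw20, sw30, sw21, sw31,
      sw32, sw10', sw20', sw30', sw21', sw31', sw32', mul_neg, neg_neg, smul_neg, mul_one]
    match_scalars <;> (first | ring1 | (ring_nf; simp [Complex.I_sq]; try ring1))

lemma Dirac_mul_const (Ω : (Fin 4 → ℤ) → Cl) (C : Cl) (k : Fin 4 → ℤ) :
    Dirac (fun k => Ω k * C) k = Dirac Ω k * C := by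
  simp only [Dirac, Δ, Finset.sum_mul]
  refine Finset.sum_congr rfl fun μ _ => ?_
  noncomm_ring

/-- Proposition 3.9: a solution `Ω` of `−DΩ = mΩe` decomposes into the eight
parts `X_{ε,s,t} = Ω P_{εe} P_{s0} P_{t12}`, each satisfying the discrete
Hestenes equation with sign `−εst`: `−(D X_{ε,s,t})e₁e₂ = (−εst) m X_{ε,s,t} e₀`. -/
theorem stmt_16 (m : ℝ) (Ω : (Fin 4 → ℤ) → Cl)
    (hΩ : ∀ k, -(Dirac Ω k) = (m : ℂ) • (Ω k * eV)) :
    (∀ k, Ω k =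
        Ω k * Pe 1 * P0 1 * P12 1 + Ω k * Pe 1 * P0 1 * P12 (-1)
      + Ω k * Pe 1 * P0 (-1) * P12 1 + Ω k * Pe 1 * P0 (-1) * P12 (-1)
      + Ω k * Pe (-1) * P0 1 * P12 1 + Ω k * Pe (-1) * P0 1 * P12 (-1)
      + Ω k * Pe (-1) * P0 (-1) * P12 1 + Ω k * Pe (-1) * P0 (-1) * P12 (-1)) ∧
    (∀ ε s t : ℂ, (ε = 1 ∨ ε = -1) → (s = 1 ∨ s = -1) → (t = 1 ∨ t = -1) →
      ∀ k, -(Dirac (fun k => Ω k * Pe ε * P0 s * P12 t) k * (e 1 * e 2)) =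
        (-(ε * s * t) * (m : ℂ)) • ((Ω k * Pe ε * P0 s * P12 t) * e 0)) := by
  constructor
  · intro k
    have h : Ω k * Pe 1 * P0 1 * P12 1 + Ω k * Pe 1 * P0 1 * P12 (-1)
      + Ω k * Pe 1 * P0 (-1) * P12 1 + Ω k * Pe 1 * P0 (-1) * P12 (-1)
      + Ω k * Pe (-1) * P0 1 * P12 1 + Ω k * Pe (-1) * P0 1 * P12 (-1)
      + Ω k * Pe (-1) * P0 (-1) * P12 1 + Ω k * Pe (-1) * P0 (-1) * P12 (-1)
      = Ω k * (Pe 1 + Pe (-1)) * (P0 1 + P0 (-1)) * (P12 1 + P12 (-1)) := by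
      noncomm_ring
    rw [h, hPe_sum, hP0_sum, hP12_sum, mul_one, mul_one, mul_one]
  · intro ε s t hε hs ht k
    have hfun : (fun k => Ω k * Pe ε * P0 s * P12 t)
        = fun k => Ω k * (Pe ε * (P0 s * P12 t)) := by
      funext k; noncomm_ring
    rw [hfun, Dirac_mul_const]
    have hDk : Dirac Ω k = -((m:ℂ) • (Ω k * eV)) := by rw [← hΩ k, neg_neg]
    rw [hDk]
    have hk := key ε s t hε hs ht
    calc -(-((m:ℂ) • (Ω k * eV)) * (Pe ε * (P0 s * P12 t)) * (e 1 * e 2))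
        = (m:ℂ) • (Ω k * (eV * (Pe ε * (P0 s * (P12 t * (e 1 * e 2)))))) := by
          simp only [neg_mul, neg_neg, smul_mul_assoc, mul_assoc]
      _ = (m:ℂ) • (Ω k * ((-(ε*s*t)) • (Pe ε * (P0 s * (P12 t * e 0))))) := by rw [hk]
      _ = (-(ε * s * t) * (m : ℂ)) • ((Ω k * Pe ε * P0 s * P12 t) * e 0) := by
          simp only [mul_smul_comm, smul_smul, mul_assoc]
          rw [mul_comm]
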